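/- Let m ∈ ℤ and n ∈ ℕ with m and n relatively prime. Let (p_i) be a sequence of primes and (k_i) a sequence of integers. Then the following are equivalent: (1) for every polynomial P ∈ ℤ[X], the sequence whose i-th term is 0 if p_i divides P(k_i) and 1 otherwise converges to 0 if P(m/n) = 0 (evaluation in ℚ) and to 1 otherwise; (2) p_i → ∞ and there exists i_0 ∈ ℕ such that for all i ≥ i_0 one has n·k_i ≡ m (mod p_i). -/

import Mathlib

open Polynomial Filter

/-- Let `m ∈ ℤ` and `n ∈ ℕ` be relatively prime, `(p_i)` a sequence of primes and
`(k_i)` a sequence of integers. The images of the residue classes of `k_i` in `ℤ/p_iℤ`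
(trivial valuations) converge in `𝔸¹_ℤ` to the image of `m/n ∈ ℚ` (trivial valuation)
iff `p_i → ∞` and eventually `n·k_i ≡ m (mod p_i)`. -/
theorem tendsto_resClasses_to_rational_iff (m : ℤ) (n : ℕ) (hn : 0 < n)
    (hmn : IsCoprime m (n : ℤ)) (p : ℕ → ℕ) (hp : ∀ i, (p i).Prime) (k : ℕ → ℤ) :
    (∀ P : Polynomial ℤ,
        Filter.Tendsto (fun i => if ((p i : ℤ)) ∣ P.eval (k i) then (0 : ℝ) else 1)
          Filter.atTop
          (nhds (if (Polynomial.aeval ((m : ℚ) / (n : ℚ)) P : ℚ) = 0 then (0 : ℝ) else 1))) ↔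
      (Filter.Tendsto p Filter.atTop Filter.atTop ∧
        ∃ i₀ : ℕ, ∀ i ≥ i₀, Int.ModEq (p i : ℤ) ((n : ℤ) * k i) m) := by
  have hn0 : ((n : ℚ)) ≠ 0 := by exact_mod_cast hn.ne'
  constructor
  · intro h
    constructor
    · rw [Filter.tendsto_atTop]
      intro b
      have h1 := h (Polynomial.C ((b.factorial : ℤ)))
      have hne : (Polynomial.aeval ((m : ℚ) / (n : ℚ))
          (Polynomial.C ((b.factorial : ℤ))) : ℚ) ≠ 0 := by
        simp [Polynomial.aeval_C, Nat.factorial_ne_zero]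
      rw [if_neg hne] at h1
      have h2 := h1.eventually (eventually_gt_nhds (by norm_num : (1:ℝ)/2 < 1))
      filter_upwards [h2] with i hi
      by_contra hb
      push_neg at hb
      have hdvd : (p i : ℤ) ∣ (Polynomial.C ((b.factorial : ℤ))).eval (k i) := by
        simp only [Polynomial.eval_C]
        exact_mod_cast Nat.dvd_factorial (hp i).pos hb.le
      rw [if_pos hdvd] at hi; norm_num at hi
    · have h1 := h (Polynomial.C (n : ℤ) * Polynomial.X - Polynomial.C m)
      have hz : (Polynomial.aeval ((m : ℚ) / (n : ℚ))
          (Polynomial.C (n : ℤ) * Polynomial.X - Polynomial.C m) : ℚ) = 0 := by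
        simp only [map_sub, map_mul, Polynomial.aeval_C, Polynomial.aeval_X,
          algebraMap_int_eq, eq_intCast]
        field_simp
        simp only [map_natCast, map_intCast, Int.cast_natCast]; ring
      rw [if_pos hz] at h1
      have h2 := h1.eventually (eventually_lt_nhds (by norm_num : (0:ℝ) < 1/2))
      rw [Filter.eventually_atTop] at h2
      obtain ⟨i₀, hi₀⟩ := h2
      refine ⟨i₀, fun i hi => ?_⟩
      have hlt := hi₀ i hi
      by_cases hdvd : (p i : ℤ) ∣
          (Polynomial.C (n : ℤ) * Polynomial.X - Polynomial.C m).eval (k i)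
      · simp only [Polynomial.eval_sub, Polynomial.eval_mul, Polynomial.eval_C,
          Polynomial.eval_X] at hdvd
        exact Int.modEq_iff_dvd.mpr (dvd_sub_comm.mp hdvd)
      · rw [if_neg hdvd] at hlt; norm_num at hlt
  · rintro ⟨htop, i₀, hmod⟩ P
    set d := P.natDegree with hd
    set Q := P.scaleRoots (n : ℤ) with hQ
    set N := Q.eval m with hN
    have hNQ : ((N : ℚ)) = (n : ℚ) ^ d * (Polynomial.aeval ((m : ℚ) / (n : ℚ)) P) := by
      have h1 := Polynomial.scaleRoots_eval₂_mul (p := P) (Int.castRingHom ℚ)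
        ((m : ℚ) / (n : ℚ)) ((n : ℤ))
      have h2 : ((Int.castRingHom ℚ) ((n : ℤ))) * ((m : ℚ) / (n : ℚ))
          = (Int.castRingHom ℚ) m := by
        push_cast
        field_simp
        simp only [Int.coe_castRingHom, Int.cast_natCast]
      rw [h2, Polynomial.eval₂_at_apply] at h1
      simp only [Int.coe_castRingHom, Int.cast_natCast] at h1
      rw [hN, hQ, h1, hd, Polynomial.aeval_def, algebraMap_int_eq]
    have hQZ : ∀ i, Q.eval ((n : ℤ) * k i) = (n : ℤ) ^ d * P.eval (k i) := by
      intro i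
      have h1 := Polynomial.scaleRoots_eval₂_mul (p := P) (RingHom.id ℤ) (k i) ((n : ℤ))
      simpa using h1
    have key : ∀ i, i₀ ≤ i → (p i : ℤ) ∣ (n : ℤ) ^ d * P.eval (k i) - N := by
      intro i hi
      have h1 : ((n : ℤ) * k i - m) ∣ Q.eval ((n : ℤ) * k i) - Q.eval m :=
        Polynomial.sub_dvd_eval_sub _ _ _
      have h2 : (p i : ℤ) ∣ (n : ℤ) * k i - m := dvd_sub_comm.mp ((hmod i hi).dvd)
      have := h2.trans h1
      rwa [hQZ i] at this
    by_cases hP : (Polynomial.aeval ((m : ℚ) / (n : ℚ)) P : ℚ) = 0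
    · rw [if_pos hP]
      refine Filter.Tendsto.congr' ?_ tendsto_const_nhds
      have hN0 : N = 0 := by
        have : ((N : ℚ)) = 0 := by rw [hNQ, hP, mul_zero]
        exact_mod_cast this
      filter_upwards [(eventually_ge_atTop i₀).and (htop.eventually_gt_atTop n)]
        with i hi
      obtain ⟨hi1, hi2⟩ := hi
      have hdvd := key i hi1
      rw [hN0, sub_zero] at hdvd
      have hpprime : Prime ((p i : ℤ)) := Nat.prime_iff_prime_int.mp (hp i)
      have hde : (p i : ℤ) ∣ P.eval (k i) := by
        rcases hpprime.dvd_mul.mp hdvd with hc | hc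
        · exfalso
          have h3 : (p i : ℤ) ∣ ((n : ℤ)) := hpprime.dvd_of_dvd_pow hc
          have h4 : p i ∣ n := by exact_mod_cast h3
          exact absurd (Nat.le_of_dvd hn h4) (not_le.mpr hi2)
        · exact hc
      simp [hde]
    · rw [if_neg hP]
      refine Filter.Tendsto.congr' ?_ tendsto_const_nhds
      have hNne : N ≠ 0 := by
        intro h0
        apply hP
        rw [h0, Int.cast_zero] at hNQ
        rcases mul_eq_zero.mp hNQ.symm with hc | hc
        · exact absurd hc (pow_ne_zero _ hn0)
        · exact hc
      filter_upwards [(eventually_ge_atTop i₀).and (htop.eventually_gt_atTop N.natAbs)]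
        with i hi
      obtain ⟨hi1, hi2⟩ := hi
      have hdvd := key i hi1
      have hnd : ¬ (p i : ℤ) ∣ P.eval (k i) := by
        intro hc
        have h3 : (p i : ℤ) ∣ N := (dvd_sub_right (hc.mul_left _)).mp hdvd
        have h4 : p i ∣ N.natAbs := by
          have := Int.natAbs_dvd_natAbs.mpr h3
          simpa using this
        exact absurd (Nat.le_of_dvd (Int.natAbs_pos.mpr hNne) h4) (not_le.mpr hi2)
      simp [hnd]
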